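/- arXiv:2112.02545 — 2 statements merged into one kernel-verified Lean document; each statement's English description precedes it below -/
import Mathlib

section
/- Let K = x0³/(x0² + 1) (a real point, regarded as a point of ℂ). Then there exists a constant c > 0, depending only on N and x0, such that for every real t and every index k, the Euclidean distance from K to the line through w_k and w_{k+1} equals c·|w_{k+1} − w_k|. (That is, K is a symmedian point for every polygon of the family: its distance to each sideline is the same fixed proportion of that side's length.) -/
set_option maxHeartbeats 2000000

lemma aux_line (p a v : ℂ) (hv : v ≠ 0) :
    Metric.infDist p {q : ℂ | ∃ s : ℝ, q = a + s • v} =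
      |((p - a) * (starRingEnd ℂ) v).im| / ‖v‖ := by
  have hvpos : 0 < ‖v‖ := by simpa using hv
  set D := |((p - a) * (starRingEnd ℂ) v).im| / ‖v‖ with hD
  have h1 : ∀ s : ℝ, ((p - (a + s • v)) * (starRingEnd ℂ) v).im
      = ((p - a) * (starRingEnd ℂ) v).im := by
    intro s
    simp [Complex.real_smul, sub_mul, Complex.mul_conj]
    ring
  have hlow : ∀ s : ℝ, D ≤ dist p (a + s • v) := by
    intro s
    have h2 : |((p - a) * (starRingEnd ℂ) v).im| ≤
        ‖p - (a + s • v)‖ * ‖v‖ := by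
      rw [← h1 s]
      calc |((p - (a + s • v)) * (starRingEnd ℂ) v).im|
          ≤ ‖(p - (a + s • v)) * (starRingEnd ℂ) v‖ :=
            Complex.abs_im_le_norm _
        _ = ‖p - (a + s • v)‖ * ‖v‖ := by simp [map_mul]
    rw [hD, div_le_iff₀ hvpos, Complex.dist_eq]
    exact h2
  set s0 : ℝ := ((p - a) * (starRingEnd ℂ) v).re / (‖v‖) ^ 2 with hs0
  have hre : ((p - (a + s0 • v)) * (starRingEnd ℂ) v).re = 0 := by
    have hns : Complex.normSq v ≠ 0 := by simpa using hv
    simp [Complex.real_smul, sub_mul, Complex.mul_conj, hs0, Complex.sq_norm]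
    rw [Complex.normSq_apply] at hns ⊢
    have hns2 : v.re ^ 2 + v.im ^ 2 ≠ 0 := by rw [sq, sq]; exact hns
    field_simp
    ring
  have habs : ‖p - (a + s0 • v)‖ * ‖v‖
      = |((p - a) * (starRingEnd ℂ) v).im| := by
    have : ‖(p - (a + s0 • v)) * (starRingEnd ℂ) v‖
        = |((p - a) * (starRingEnd ℂ) v).im| := by
      rw [Complex.norm_def, Complex.normSq_apply, hre, h1 s0]
      simpa using Real.sqrt_mul_self_eq_abs _
    rw [norm_mul, Complex.norm_conj] at this
    exact this
  have hattain : dist p (a + s0 • v) = D := by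
    rw [Complex.dist_eq, hD, eq_div_iff (ne_of_gt hvpos)]
    exact habs
  apply le_antisymm
  · rw [← hattain]
    exact Metric.infDist_le_dist_of_mem ⟨s0, rfl⟩
  · have hne : Set.Nonempty {q : ℂ | ∃ s : ℝ, q = a + s • v} := ⟨a, 0, by simp⟩
    refine le_of_not_gt fun h => ?_
    obtain ⟨q, ⟨s, rfl⟩, hq⟩ := (Metric.infDist_lt_iff hne).1 h
    exact absurd hq (not_lt.2 (hlow s))

lemma conj_of_abs_one {u : ℂ} (hu : ‖u‖ = 1) : (starRingEnd ℂ) u = u⁻¹ := by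
  have hns : Complex.normSq u = 1 := by
    rw [← Complex.sq_norm, hu]; norm_num
  rw [Complex.inv_def, hns]
  simp

lemma key_identity (x0 : ℝ) (hx1 : |x0| < 1) (u ω : ℂ)
    (hu : ‖u‖ = 1) (hom : ‖ω‖ = 1) :
    ((((x0 ^ 3 / (x0 ^ 2 + 1) : ℝ) : ℂ) - ((x0 : ℂ) + u / (1 - (x0 : ℂ) * u))) *
        (starRingEnd ℂ) (((x0 : ℂ) + ω * u / (1 - (x0 : ℂ) * (ω * u))) -
          ((x0 : ℂ) + u / (1 - (x0 : ℂ) * u)))).im *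
      ((x0 ^ 2 + 1) * Complex.normSq (ω - 1))
    = (1 - x0 ^ 2) * ω.im *
        Complex.normSq (((x0 : ℂ) + ω * u / (1 - (x0 : ℂ) * (ω * u))) -
          ((x0 : ℂ) + u / (1 - (x0 : ℂ) * u))) := by
  have hu0 : u ≠ 0 := by intro h; rw [h] at hu; simp at hu
  have hom0 : ω ≠ 0 := by intro h; rw [h] at hom; simp at hom
  have hcu : (starRingEnd ℂ) u = u⁻¹ := conj_of_abs_one hu
  have hcom : (starRingEnd ℂ) ω = ω⁻¹ := conj_of_abs_one hom
  have habs_lt : ∀ v : ℂ, ‖v‖ = 1 → 1 - (x0 : ℂ) * v ≠ 0 := by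
    intro v hv h
    have hx : (x0 : ℂ) * v = 1 := by linear_combination -h
    have : ‖(x0 : ℂ) * v‖ = 1 := by rw [hx]; simp
    rw [norm_mul, hv, mul_one, Complex.norm_real, Real.norm_eq_abs] at this
    exact absurd this (ne_of_lt hx1)
  have hD1 : 1 - (x0 : ℂ) * u ≠ 0 := habs_lt u hu
  have hD2 : 1 - (x0 : ℂ) * (ω * u) ≠ 0 := habs_lt _ (by rw [norm_mul, hu, hom]; norm_num)
  have hE1 : u - (x0 : ℂ) ≠ 0 := by
    intro h
    have hx : u = (x0 : ℂ) := by linear_combination h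
    rw [hx, Complex.norm_real, Real.norm_eq_abs] at hu
    exact (ne_of_lt hx1) hu
  have hE2 : ω * u - (x0 : ℂ) ≠ 0 := by
    intro h
    have hx : ω * u = (x0 : ℂ) := by linear_combination h
    have h2 : ‖ω * u‖ = 1 := by rw [norm_mul, hu, hom]; norm_num
    rw [hx, Complex.norm_real, Real.norm_eq_abs] at h2
    exact (ne_of_lt hx1) h2
  have hPr : (0:ℝ) < x0 ^ 2 + 1 := by positivity
  have hP : ((x0 : ℂ) ^ 2 + 1) ≠ 0 := by
    have h : ((x0 : ℂ) ^ 2 + 1) = ((x0 ^ 2 + 1 : ℝ) : ℂ) := by push_cast; ring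
    rw [h]
    exact_mod_cast Complex.ofReal_ne_zero.mpr (ne_of_gt hPr)
  set K : ℂ := ((x0 ^ 3 / (x0 ^ 2 + 1) : ℝ) : ℂ) with hKdef
  set w1 : ℂ := (x0 : ℂ) + u / (1 - (x0 : ℂ) * u) with hw1
  set w2 : ℂ := (x0 : ℂ) + ω * u / (1 - (x0 : ℂ) * (ω * u)) with hw2
  set V : ℂ := w2 - w1 with hVdef
  set X : ℂ := (K - w1) * (starRingEnd ℂ) V with hXdef
  -- conjugates
  have hq1 : 1 - (x0:ℂ) * u⁻¹ = (u - x0) * u⁻¹ := by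
    field_simp
  have hq1' : 1 - (x0:ℂ) * u⁻¹ ≠ 0 := by
    rw [hq1]; exact mul_ne_zero hE1 (inv_ne_zero hu0)
  have hq2 : 1 - (x0:ℂ) * (ω * u)⁻¹ = (ω * u - x0) * (ω * u)⁻¹ := by
    field_simp
  have hq2' : 1 - (x0:ℂ) * (ω * u)⁻¹ ≠ 0 := by
    rw [hq2]; exact mul_ne_zero hE2 (inv_ne_zero (mul_ne_zero hom0 hu0))
  have hcw1 : (starRingEnd ℂ) w1 = (x0 : ℂ) + 1 / (u - x0) := by
    rw [hw1]
    simp only [map_add, map_div₀, map_sub, map_mul, map_one, Complex.conj_ofReal, hcu]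
    rw [hq1]
    congr 1
    rw [div_eq_div_iff (mul_ne_zero hE1 (inv_ne_zero hu0)) hE1]
    field_simp
  have hcw2 : (starRingEnd ℂ) w2 = (x0 : ℂ) + 1 / (ω * u - x0) := by
    rw [hw2]
    simp only [map_add, map_div₀, map_sub, map_mul, map_one, Complex.conj_ofReal, hcu, hcom]
    have hmi : ω⁻¹ * u⁻¹ = (ω * u)⁻¹ := by rw [mul_inv]
    rw [hmi, hq2]
    congr 1
    rw [div_eq_div_iff (mul_ne_zero hE2 (inv_ne_zero (mul_ne_zero hom0 hu0))) hE2]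
    field_simp
  have hcK : (starRingEnd ℂ) K = K := Complex.conj_ofReal _
  have hXc : (starRingEnd ℂ) X = (K - ((x0 : ℂ) + 1 / (u - x0))) * V := by
    rw [hXdef, map_mul, Complex.conj_conj, map_sub, hcK, hcw1]
  have hVc : (starRingEnd ℂ) V = 1 / (ω * u - x0) - 1 / (u - x0) := by
    rw [hVdef, map_sub, hcw1, hcw2]; ring
  have hVfrac : V = u * (ω - 1) / ((1 - (x0:ℂ) * u) * (1 - (x0:ℂ) * (ω * u))) := by
    rw [hVdef, hw1, hw2]
    rw [add_sub_add_left_eq_sub, div_sub_div _ _ hD2 hD1, div_eq_div_iff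
      (mul_ne_zero hD2 hD1) (mul_ne_zero hD1 hD2)]
    ring
  have hcVfrac : (starRingEnd ℂ) V = u * (1 - ω) / ((ω * u - x0) * (u - x0)) := by
    rw [hVc, div_sub_div _ _ hE2 hE1]
    congr 1
    ring
  have hKw1 : K - w1 = -((x0:ℂ) + u) / ((((x0:ℂ)) ^ 2 + 1) * (1 - (x0:ℂ) * u)) := by
    rw [hKdef, hw1]
    push_cast
    field_simp
    ring
  have hKcw1 : K - ((x0:ℂ) + 1 / (u - x0))
      = -((x0:ℂ) * u + 1) / ((((x0:ℂ)) ^ 2 + 1) * (u - x0)) := by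
    rw [hKdef]
    push_cast
    field_simp
    ring
  have hX1 : X = -((x0:ℂ) + u) * (u * (1 - ω)) /
      (((((x0:ℂ)) ^ 2 + 1) * (1 - (x0:ℂ) * u)) * ((ω * u - x0) * (u - x0))) := by
    rw [hXdef, hKw1, hcVfrac, div_mul_div_comm]
  have hX2 : (starRingEnd ℂ) X = -((x0:ℂ) * u + 1) * (u * (ω - 1)) /
      (((((x0:ℂ)) ^ 2 + 1) * (u - x0)) * ((1 - (x0:ℂ) * u) * (1 - (x0:ℂ) * (ω * u)))) := by
    rw [hXc, hKcw1, hVfrac, div_mul_div_comm]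
  have hVV : V * (starRingEnd ℂ) V = (u * (ω - 1)) * (u * (1 - ω)) /
      (((1 - (x0:ℂ) * u) * (1 - (x0:ℂ) * (ω * u))) * ((ω * u - x0) * (u - x0))) := by
    rw [hcVfrac, hVfrac, div_mul_div_comm]
  have hom1 : (ω - 1) * (starRingEnd ℂ) (ω - 1) = ((ω - 1) * (1 - ω)) / ω := by
    rw [map_sub, map_one, hcom, eq_div_iff hom0]
    calc (ω - 1) * (ω⁻¹ - 1) * ω = (ω - 1) * ((ω⁻¹ - 1) * ω) := by ring
      _ = (ω - 1) * (1 - ω) := by rw [sub_mul ω⁻¹ 1 ω, inv_mul_cancel₀ hom0, one_mul]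
  have hom5 : ω - (starRingEnd ℂ) ω = (ω * ω - 1) / ω := by
    rw [hcom, eq_div_iff hom0, sub_mul, inv_mul_cancel₀ hom0]
  have hB1 : ((((x0:ℂ)) ^ 2 + 1) * (1 - (x0:ℂ) * u)) * ((ω * u - x0) * (u - x0)) ≠ 0 :=
    mul_ne_zero (mul_ne_zero hP hD1) (mul_ne_zero hE2 hE1)
  have hB2 : ((((x0:ℂ)) ^ 2 + 1) * (u - x0)) * ((1 - (x0:ℂ) * u) * (1 - (x0:ℂ) * (ω * u))) ≠ 0 :=
    mul_ne_zero (mul_ne_zero hP hE1) (mul_ne_zero hD1 hD2)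
  have hB3 : ((1 - (x0:ℂ) * u) * (1 - (x0:ℂ) * (ω * u))) * ((ω * u - x0) * (u - x0)) ≠ 0 :=
    mul_ne_zero (mul_ne_zero hD1 hD2) (mul_ne_zero hE2 hE1)
  have hC : (X - (starRingEnd ℂ) X) *
        (((x0 : ℂ) ^ 2 + 1) * ((ω - 1) * (starRingEnd ℂ) (ω - 1)))
      = (1 - (x0 : ℂ) ^ 2) * (ω - (starRingEnd ℂ) ω) * (V * (starRingEnd ℂ) V) := by
    rw [hX2, hX1, hVV, hom1, hom5]
    rw [div_sub_div _ _ hB1 hB2]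
    set A1 : ℂ := -((x0:ℂ) + u) * (u * (1 - ω)) with hA1
    set A2 : ℂ := -((x0:ℂ) * u + 1) * (u * (ω - 1)) with hA2
    set A3 : ℂ := (u * (ω - 1)) * (u * (1 - ω)) with hA3
    set B1 : ℂ := ((((x0:ℂ)) ^ 2 + 1) * (1 - (x0:ℂ) * u)) * ((ω * u - x0) * (u - x0)) with hB1d
    set B2 : ℂ := ((((x0:ℂ)) ^ 2 + 1) * (u - x0)) * ((1 - (x0:ℂ) * u) * (1 - (x0:ℂ) * (ω * u)))
      with hB2d
    set B3 : ℂ := ((1 - (x0:ℂ) * u) * (1 - (x0:ℂ) * (ω * u))) * ((ω * u - x0) * (u - x0))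
      with hB3d
    calc ((A1 * B2 - B1 * A2) / (B1 * B2)) * (((x0:ℂ) ^ 2 + 1) * (((ω - 1) * (1 - ω)) / ω))
        = ((A1 * B2 - B1 * A2) * (((x0:ℂ) ^ 2 + 1) * ((ω - 1) * (1 - ω)))) / (B1 * B2 * ω) := by
          rw [← mul_div_assoc, div_mul_div_comm]
      _ = ((1 - (x0:ℂ) ^ 2) * ((ω * ω - 1) * A3)) / (ω * B3) := by
          rw [div_eq_div_iff (mul_ne_zero (mul_ne_zero hB1 hB2) hom0) (mul_ne_zero hom0 hB3),
            hA1, hA2, hA3, hB1d, hB2d, hB3d]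
          ring
      _ = (1 - (x0:ℂ) ^ 2) * ((ω * ω - 1) / ω) * (A3 / B3) := by
          field_simp
  have h1 : (ω - 1) * (starRingEnd ℂ) (ω - 1) = ((Complex.normSq (ω - 1) : ℝ) : ℂ) :=
    Complex.mul_conj _
  have h2 : V * (starRingEnd ℂ) V = ((Complex.normSq V : ℝ) : ℂ) := Complex.mul_conj _
  rw [h1, h2, Complex.sub_conj, Complex.sub_conj] at hC
  have hC2 : ((2 * X.im * ((x0 ^ 2 + 1) * Complex.normSq (ω - 1)) : ℝ) : ℂ) * Complex.I
      = ((2 * ω.im * ((1 - x0 ^ 2) * Complex.normSq V) : ℝ) : ℂ) * Complex.I := by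
    push_cast at hC ⊢
    linear_combination hC
  have hC3 := mul_right_cancel₀ Complex.I_ne_zero hC2
  have hC4 : 2 * X.im * ((x0 ^ 2 + 1) * Complex.normSq (ω - 1))
      = 2 * ω.im * ((1 - x0 ^ 2) * Complex.normSq V) := by exact_mod_cast hC3
  linarith [hC4]

lemma one_sub_mul_ne (x0 : ℝ) (hx1 : |x0| < 1) {v : ℂ} (hv : ‖v‖ = 1) :
    1 - (x0 : ℂ) * v ≠ 0 := by
  intro h
  have hx : (x0 : ℂ) * v = 1 := by linear_combination -h
  have h2 : ‖(x0 : ℂ) * v‖ = 1 := by rw [hx]; simp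
  rw [norm_mul, hv, mul_one, Complex.norm_real, Real.norm_eq_abs] at h2
  exact absurd h2 (ne_of_lt hx1)

lemma V_frac (x0 : ℝ) (hx1 : |x0| < 1) (u ω : ℂ)
    (hu : ‖u‖ = 1) (hom : ‖ω‖ = 1) :
    ((x0:ℂ) + ω * u / (1 - (x0:ℂ) * (ω * u))) - ((x0:ℂ) + u / (1 - (x0:ℂ) * u))
      = u * (ω - 1) / ((1 - (x0:ℂ) * u) * (1 - (x0:ℂ) * (ω * u))) := by
  have hD1 : 1 - (x0:ℂ) * u ≠ 0 := one_sub_mul_ne x0 hx1 hu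
  have hD2 : 1 - (x0:ℂ) * (ω * u) ≠ 0 :=
    one_sub_mul_ne x0 hx1 (by rw [norm_mul, hu, hom]; norm_num)
  rw [add_sub_add_left_eq_sub, div_sub_div _ _ hD2 hD1,
    div_eq_div_iff (mul_ne_zero hD2 hD1) (mul_ne_zero hD1 hD2)]
  ring

open Real

/-- `K = x0³/(x0² + 1)` is a symmedian point for every polygon of the harmonic
family: there is a constant `c > 0`, depending only on `N` and `x0`, such that
for every `t` and every `k`, the distance from `K` to the sideline through
`w_k` and `w_{k+1}` equals `c` times the sidelength `|w_{k+1} − w_k|`. -/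
theorem symmedian_point_distance_proportional (N : ℕ) (hN : 3 ≤ N)
    (x0 : ℝ) (hx0 : 0 < |x0|) (hx1 : |x0| < 1)
    (z w : ℝ → ℤ → ℂ)
    (hz : ∀ (t : ℝ) (k : ℤ), z t k = Complex.exp (Complex.I *
      ((2 * (Real.pi / N) * (k : ℝ) + t : ℝ) : ℂ)))
    (hw : ∀ (t : ℝ) (k : ℤ), w t k = (x0 : ℂ) +
      (z t k - (x0 : ℂ)) / ((‖z t k - (x0 : ℂ)‖) ^ 2 : ℝ))
    (K : ℂ) (hK : K = ((x0 ^ 3 / (x0 ^ 2 + 1) : ℝ) : ℂ)) :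
    ∃ c : ℝ, 0 < c ∧ ∀ (t : ℝ) (k : ℤ),
      Metric.infDist K {p : ℂ | ∃ s : ℝ, p = w t k + s • (w t (k + 1) - w t k)} =
        c * ‖w t (k + 1) - w t k‖ := by
  have hNpos : (0:ℝ) < N := by positivity
  have hN3 : (3:ℝ) ≤ (N:ℝ) := by exact_mod_cast hN
  set ω : ℂ := Complex.exp (Complex.I * ((2 * (Real.pi / N) : ℝ) : ℂ)) with hωdef
  have hωabs : ‖ω‖ = 1 := by
    rw [hωdef, Complex.norm_exp]
    norm_num [Complex.mul_re]
  have hωim : ω.im = Real.sin (2 * (Real.pi / N)) := by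
    rw [hωdef, mul_comm Complex.I]
    exact Complex.exp_ofReal_mul_I_im _
  have hsin : 0 < Real.sin (2 * (Real.pi / N)) := by
    apply Real.sin_pos_of_pos_of_lt_pi
    · have := Real.pi_pos
      positivity
    · have hπ := Real.pi_pos
      have h2 : 2 * (Real.pi / N) = 2 * Real.pi / N := by ring
      rw [h2, div_lt_iff₀ hNpos]
      nlinarith
  have hω1 : ω - 1 ≠ 0 := by
    intro h
    have h1 : ω = 1 := by linear_combination h
    rw [h1] at hωim
    simp at hωim
    linarith
  have hx2 : x0 ^ 2 < 1 := by
    have := sq_abs x0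
    nlinarith [abs_nonneg x0]
  have hnspos : 0 < Complex.normSq (ω - 1) := Complex.normSq_pos.mpr hω1
  refine ⟨(1 - x0 ^ 2) * Real.sin (2 * (Real.pi / N)) /
      ((x0 ^ 2 + 1) * Complex.normSq (ω - 1)), ?_, ?_⟩
  · apply div_pos
    · apply mul_pos _ hsin
      linarith
    · apply mul_pos _ hnspos
      positivity
  intro t k
  set u : ℂ := z t k with hudef
  have hzabs : ∀ m : ℤ, ‖z t m‖ = 1 := by
    intro m
    rw [hz, Complex.norm_exp]
    norm_num [Complex.mul_re]
  have hu : ‖u‖ = 1 := hzabs k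
  have hu0 : u ≠ 0 := by intro h; rw [h] at hu; simp at hu
  have hz2 : z t (k + 1) = ω * u := by
    rw [hudef, hz, hz, hωdef, ← Complex.exp_add]
    congr 1
    push_cast
    ring
  -- w in Möbius form
  have hwform : ∀ m : ℤ, w t m = (x0 : ℂ) + (z t m) / (1 - (x0 : ℂ) * z t m) := by
    intro m
    have hZ : ‖z t m‖ = 1 := hzabs m
    have hZ0 : z t m ≠ 0 := by intro h; rw [h] at hZ; simp at hZ
    have hcZ : (starRingEnd ℂ) (z t m) = (z t m)⁻¹ := conj_of_abs_one hZ
    have hE : z t m - (x0 : ℂ) ≠ 0 := by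
      intro h
      have hx : z t m = (x0 : ℂ) := by linear_combination h
      rw [hx, Complex.norm_real, Real.norm_eq_abs] at hZ
      exact (ne_of_lt hx1) hZ
    have hD : 1 - (x0 : ℂ) * z t m ≠ 0 := one_sub_mul_ne x0 hx1 hZ
    rw [hw]
    congr 1
    have hcast : (((‖z t m - (x0 : ℂ)‖) ^ 2 : ℝ) : ℂ)
        = (z t m - (x0 : ℂ)) * (starRingEnd ℂ) (z t m - (x0 : ℂ)) := by
      rw [Complex.sq_norm, Complex.mul_conj]
    rw [hcast, map_sub, hcZ, Complex.conj_ofReal]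
    rw [div_eq_div_iff (mul_ne_zero hE (by
      intro h
      apply hE
      have h2 : (z t m)⁻¹ = (x0 : ℂ) := by linear_combination h
      have h3 : ‖(z t m)⁻¹‖ = 1 := by rw [norm_inv, hZ]; norm_num
      rw [h2, Complex.norm_real, Real.norm_eq_abs] at h3
      exact absurd h3 (ne_of_lt hx1))) hD]
    have hstep : ((z t m)⁻¹ - (x0:ℂ)) * z t m = 1 - (x0:ℂ) * z t m := by
      rw [sub_mul, inv_mul_cancel₀ hZ0]
    linear_combination (-(z t m - (x0:ℂ))) * hstep
  have hw1e : w t k = (x0 : ℂ) + u / (1 - (x0 : ℂ) * u) := hwform k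
  have hw2e : w t (k + 1) = (x0 : ℂ) + ω * u / (1 - (x0 : ℂ) * (ω * u)) := by
    rw [hwform (k + 1), hz2]
  -- the side is nonzero
  have hD1 : 1 - (x0:ℂ) * u ≠ 0 := one_sub_mul_ne x0 hx1 hu
  have hD2 : 1 - (x0:ℂ) * (ω * u) ≠ 0 :=
    one_sub_mul_ne x0 hx1 (by rw [norm_mul, hu, hωabs]; norm_num)
  have hvfrac := V_frac x0 hx1 u ω hu hωabs
  have hv0 : w t (k + 1) - w t k ≠ 0 := by
    rw [hw1e, hw2e, hvfrac]
    exact div_ne_zero (mul_ne_zero hu0 hω1) (mul_ne_zero hD1 hD2)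
  rw [aux_line K (w t k) (w t (k + 1) - w t k) hv0]
  rw [hK, hw1e, hw2e]
  have habsV : ‖((x0:ℂ) + ω * u / (1 - (x0:ℂ) * (ω * u))) -
      ((x0:ℂ) + u / (1 - (x0:ℂ) * u))‖ ≠ 0 := by
    rw [← hw2e, ← hw1e]
    exact norm_ne_zero_iff.mpr hv0
  have hIm := key_identity x0 hx1 u ω hu hωabs
  rw [hωim] at hIm
  set V : ℂ := ((x0:ℂ) + ω * u / (1 - (x0:ℂ) * (ω * u))) -
      ((x0:ℂ) + u / (1 - (x0:ℂ) * u)) with hVdef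
  set c : ℝ := (1 - x0 ^ 2) * Real.sin (2 * (Real.pi / N)) /
      ((x0 ^ 2 + 1) * Complex.normSq (ω - 1)) with hcdef
  have hcpos : 0 < c := by
    rw [hcdef]
    apply div_pos
    · apply mul_pos _ hsin
      linarith
    · apply mul_pos _ hnspos
      positivity
  have hXim : ((((x0 ^ 3 / (x0 ^ 2 + 1) : ℝ) : ℂ) -
        ((x0:ℂ) + u / (1 - (x0:ℂ) * u))) * (starRingEnd ℂ) V).im
      = c * Complex.normSq V := by
    rw [hcdef]
    rw [div_mul_eq_mul_div, eq_div_iff (by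
      apply ne_of_gt
      apply mul_pos _ hnspos
      positivity)]
    linear_combination hIm
  rw [hXim, abs_of_nonneg (mul_nonneg hcpos.le (Complex.normSq_nonneg V))]
  rw [← Complex.sq_norm, sq, ← mul_assoc, mul_div_assoc, div_self habsV, mul_one]
end

section
/- Let κ = 2x0·cos(2α) − x0³ − 1/x0, x_c = ((2x0² − 1)·cos(2α) − x0⁴ + x0² − 1)/κ, κ′ = (x0² + 1)² − 4x0²·cos²α, a = (1 − x0²)·cos α/κ′, and b = cos α/√κ′. Then for every index k and every real t, the line through w_k and w_{k+1} is tangent to the Brocard inellipse E given by (x − x_c)²/a² + y²/b² = 1, i.e., it meets E in exactly one point. -/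
open Real

set_option maxHeartbeats 1000000

private lemma abs_lt_one_of_sq {x : ℝ} (h : x^2 < 1) : |x| < 1 := by
  nlinarith [abs_nonneg x, sq_abs x]

private lemma brocard_key (x0 ca sa cu su xc a b c1 s1 c2 s2 D1 D2 kp e1 FI SS TT : ℝ)
    (hx0 : x0 ≠ 0) (hx1 : x0^2 < 1) (hca : 0 < ca) (hsa : 0 < sa)
    (hpa : sa^2 = 1 - ca^2) (hpu : su^2 = 1 - cu^2)
    (hc1 : c1 = cu*ca + su*sa) (hs1 : s1 = su*ca - cu*sa)
    (hc2 : c2 = cu*ca - su*sa) (hs2 : s2 = su*ca + cu*sa)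
    (hD1 : D1 = 1 - 2*x0*c1 + x0^2) (hD2 : D2 = 1 - 2*x0*c2 + x0^2)
    (hkp : kp = (x0^2 + 1)^2 - 4*x0^2*ca^2)
    (he1 : e1 = 2*x0*ca^2 - (1 + x0^2)*c1)
    (hFI : FI = 2*sa*cu*(1 + x0^2) - 4*x0*ca*sa*(su^2 + cu^2))
    (hSS : SS = 4*sa^2*su^2*kp + FI^2)
    (hTT : TT = 2*sa*su*e1 + s1*FI)
    (hxc : xc = -(x0*((2*x0^2 - 1)*(2*ca^2 - 1) - x0^4 + x0^2 - 1))/kp)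
    (ha : a = (1 - x0^2)*ca/kp)
    (hb2 : b^2 = ca^2/kp) (hb0 : b ≠ 0) :
    ∃! q : ℝ × ℝ,
      (∃ s : ℝ, q = ((x0 + (c1 - x0)/D1) + s*((x0 + (c2 - x0)/D2) - (x0 + (c1 - x0)/D1)),
                     s1/D1 + s*(s2/D2 - s1/D1))) ∧
      (q.1 - xc)^2/a^2 + q.2^2/b^2 = 1 := by
  have h1x : (0:ℝ) < 1 - x0^2 := by linarith
  have hkpos : (0:ℝ) < kp := by
    have halt : kp = (1 - x0^2)^2 + 4*x0^2*sa^2 := by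
      rw [hkp]; linear_combination (-4*x0^2)*hpa
    rw [halt]; exact add_pos_of_pos_of_nonneg (pow_pos h1x 2) (by positivity)
  have hkpne : kp ≠ 0 := ne_of_gt hkpos
  have hc1s : c1^2 + s1^2 = 1 := by
    rw [hc1, hs1]; linear_combination (cu^2 + su^2)*hpa + hpu
  have hc2s : c2^2 + s2^2 = 1 := by
    rw [hc2, hs2]; linear_combination (cu^2 + su^2)*hpa + hpu
  have hc1sq : c1^2 ≤ 1 := by linarith [hc1s, sq_nonneg s1]
  have hc2sq : c2^2 ≤ 1 := by linarith [hc2s, sq_nonneg s2]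
  have hx2c1 : (0:ℝ) ≤ x0^2*(1 - c1^2) := mul_nonneg (sq_nonneg x0) (by linarith)
  have hx2c2 : (0:ℝ) ≤ x0^2*(1 - c2^2) := mul_nonneg (sq_nonneg x0) (by linarith)
  have ht1 : (x0*c1)^2 < 1 := by
    have e1' : (x0*c1)^2 = x0^2*c1^2 := by ring
    have e3 : x0^2*(1 - c1^2) = x0^2 - x0^2*c1^2 := by ring
    linarith [hx2c1, hx1, sq_nonneg x0]
  have ht2 : (x0*c2)^2 < 1 := by
    have e1' : (x0*c2)^2 = x0^2*c2^2 := by ring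
    have e3 : x0^2*(1 - c2^2) = x0^2 - x0^2*c2^2 := by ring
    linarith [hx2c2, hx1, sq_nonneg x0]
  have hg1 : (0:ℝ) < 1 - x0*c1 := by
    have h' := abs_lt.mp (abs_lt_one_of_sq ht1)
    linarith [h'.2]
  have hg2 : (0:ℝ) < 1 - x0*c2 := by
    have h' := abs_lt.mp (abs_lt_one_of_sq ht2)
    linarith [h'.2]
  have hD1pos : (0:ℝ) < D1 := by
    have he : D1 = (1 - x0*c1)^2 + x0^2*s1^2 := by
      rw [hD1]; linear_combination (-(x0^2))*hc1s
    rw [he]; exact add_pos_of_pos_of_nonneg (pow_pos hg1 2) (by positivity)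
  have hD2pos : (0:ℝ) < D2 := by
    have he : D2 = (1 - x0*c2)^2 + x0^2*s2^2 := by
      rw [hD2]; linear_combination (-(x0^2))*hc2s
    rw [he]; exact add_pos_of_pos_of_nonneg (pow_pos hg2 2) (by positivity)
  have hD1ne : D1 ≠ 0 := ne_of_gt hD1pos
  have hD2ne : D2 ≠ 0 := ne_of_gt hD2pos
  have hcane : ca ≠ 0 := ne_of_gt hca
  have hcu1 : cu^2 ≤ 1 := by linarith [hpu, sq_nonneg su]
  have hca1 : ca^2 < 1 := by linarith [hpa, pow_pos hsa 2]
  have hcc : (0:ℝ) ≤ ca^2*(1 - cu^2) := mul_nonneg (sq_nonneg ca) (by linarith)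
  have hM : (0:ℝ) < 1 + x0^2 - 2*x0*(ca*cu) := by
    have e4 : (x0 - ca*cu)^2 = x0^2 - 2*x0*(ca*cu) + (ca*cu)^2 := by ring
    have e5 : (ca*cu)^2 = ca^2 - ca^2*(1 - cu^2) := by ring
    linarith [sq_nonneg (x0 - ca*cu), hcc, hca1]
  have hSSpos : (0:ℝ) < SS := by
    have hSSeq : SS = 4*sa^2*(1 + x0^2 - 2*x0*(ca*cu))^2 := by
      rw [hSS, hFI, hkp]
      linear_combination ((-4) + (4)*su^2 + (4)*cu^2 + (16)*x0*ca*cu + (-16)*x0*ca*cu*su^2 + (-16)*x0*ca*cu^3 + (-8)*x0^2 + (8)*x0^2*su^2 + (8)*x0^2*cu^2 + (-16)*x0^2*ca^2*su^2 + (16)*x0^2*ca^2*su^4 + (-16)*x0^2*ca^2*cu^2 + (32)*x0^2*ca^2*cu^2*su^2 + (16)*x0^2*ca^2*cu^4 + (16)*x0^3*ca*cu + (-16)*x0^3*ca*cu*su^2 + (-16)*x0^3*ca*cu^3 + (-4)*x0^4 + (4)*x0^4*su^2 + (4)*x0^4*cu^2)*hpa + ((4) + (-4)*ca^2 + (-16)*x0*ca*cu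 + (16)*x0*ca^3*cu + (8)*x0^2 + (-8)*x0^2*ca^2 + (16)*x0^2*ca^2*su^2 + (16)*x0^2*ca^2*cu^2 + (-16)*x0^2*ca^4*su^2 + (-16)*x0^2*ca^4*cu^2 + (-16)*x0^3*ca*cu + (16)*x0^3*ca^3*cu + (4)*x0^4 + (-4)*x0^4*ca^2)*hpu
    rw [hSSeq]
    exact mul_pos (mul_pos (by norm_num : (0:ℝ) < 4) (pow_pos hsa 2)) (pow_pos hM 2)
  have hSSne : SS ≠ 0 := ne_of_gt hSSpos
  have hdenpos : (0:ℝ) < ca^2*D1^2*D2^2 :=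
    mul_pos (mul_pos (pow_pos hca 2) (pow_pos hD1pos 2)) (pow_pos hD2pos 2)
  have hdenne : (ca^2*D1^2*D2^2 : ℝ) ≠ 0 := ne_of_gt hdenpos
  have hC0 : (e1^2 + kp*s1^2 - ca^2*D1^2)*(4*sa^2*su^2*kp + FI^2)
      = kp*(2*sa*su*e1 + s1*FI)^2 := by
    rw [he1, hFI, hs1, hD1, hkp, hc1]
    linear_combination ((-4)*ca^2*su^2 + (4)*ca^2*su^4 + (-4)*ca^2*cu^2 + (8)*ca^2*cu^2*su^2 + (4)*ca^2*cu^4 + (16)*x0*ca^2*sa*su^3 + (-16)*x0*ca^2*sa*su^5 + (16)*x0*ca^2*sa*cu^2*su + (-32)*x0*ca^2*sa*cu^2*su^3 + (-16)*x0*ca^2*sa*cu^4*su + (16)*x0*ca^3*cu*su^2 + (-16)*x0*ca^3*cu*su^4 + (16)*x0*ca^3*cu^3 + (-32)*x0*ca^3*cu^3*su^2 + (-16)*x0*ca^3*cu^5 + (-16)*x0^2*ca^2*su^2 + (16)*x0^2*ca^2*su^6 + (-16)*x0^2*ca^2*cu^2 + (16)*x0^2*ca^2*cu^2*su^2 + (32)*x0^2*ca^2*cu^2*su^4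 + (16)*x0^2*ca^2*cu^4 + (16)*x0^2*ca^2*cu^4*su^2 + (-16)*x0^2*ca^2*sa^2*su^4 + (16)*x0^2*ca^2*sa^2*su^6 + (-16)*x0^2*ca^2*sa^2*cu^2*su^2 + (32)*x0^2*ca^2*sa^2*cu^2*su^4 + (16)*x0^2*ca^2*sa^2*cu^4*su^2 + (-32)*x0^2*ca^3*sa*cu*su^3 + (32)*x0^2*ca^3*sa*cu*su^5 + (-32)*x0^2*ca^3*sa*cu^3*su + (64)*x0^2*ca^3*sa*cu^3*su^3 + (32)*x0^2*ca^3*sa*cu^5*su + (16)*x0^2*ca^4*su^2 + (-16)*x0^2*ca^4*su^6 + (16)*x0^2*ca^4*cu^2 + (-32)*x0^2*ca^4*cu^2*su^2 + (-16)*x0^2*ca^4*cu^2*su^4 + (-32)*x0^2*ca^4*cu^4 + (16)*x0^2*ca^4*cu^4*su^2 + (16)*x0^2*ca^4*cu^6 + (48)*x0^3*ca^2*sa*su^3 + (-48)*x0^3*ca^2*sa*su^5 + (48)*x0^3*ca^2*sa*cu^2*su + (-96)*x0^3*ca^2*sa*cu^2*su^3 + (-48)*x0^3*ca^2*sa*cu^4*su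 + (48)*x0^3*ca^3*cu*su^2 + (-48)*x0^3*ca^3*cu*su^4 + (48)*x0^3*ca^3*cu^3 + (-96)*x0^3*ca^3*cu^3*su^2 + (-48)*x0^3*ca^3*cu^5 + (-64)*x0^3*ca^4*sa*su^3 + (64)*x0^3*ca^4*sa*su^5 + (-64)*x0^3*ca^4*sa*cu^2*su + (128)*x0^3*ca^4*sa*cu^2*su^3 + (64)*x0^3*ca^4*sa*cu^4*su + (-64)*x0^3*ca^5*cu*su^2 + (64)*x0^3*ca^5*cu*su^4 + (-64)*x0^3*ca^5*cu^3 + (128)*x0^3*ca^5*cu^3*su^2 + (64)*x0^3*ca^5*cu^5 + (-24)*x0^4*ca^2*su^2 + (-8)*x0^4*ca^2*su^4 + (32)*x0^4*ca^2*su^6 + (-24)*x0^4*ca^2*cu^2 + (16)*x0^4*ca^2*cu^2*su^2 + (64)*x0^4*ca^2*cu^2*su^4 + (24)*x0^4*ca^2*cu^4 + (32)*x0^4*ca^2*cu^4*su^2 + (-32)*x0^4*ca^2*sa^2*su^4 + (32)*x0^4*ca^2*sa^2*su^6 + (-32)*x0^4*ca^2*sa^2*cu^2*su^2 + (64)*x0^4*ca^2*sa^2*cu^2*su^4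 + (32)*x0^4*ca^2*sa^2*cu^4*su^2 + (-64)*x0^4*ca^3*sa*cu*su^3 + (64)*x0^4*ca^3*sa*cu*su^5 + (-64)*x0^4*ca^3*sa*cu^3*su + (128)*x0^4*ca^3*sa*cu^3*su^3 + (64)*x0^4*ca^3*sa*cu^5*su + (32)*x0^4*ca^4*su^2 + (64)*x0^4*ca^4*su^4 + (-96)*x0^4*ca^4*su^6 + (32)*x0^4*ca^4*cu^2 + (-160)*x0^4*ca^4*cu^2*su^4 + (-64)*x0^4*ca^4*cu^4 + (-32)*x0^4*ca^4*cu^4*su^2 + (32)*x0^4*ca^4*cu^6 + (64)*x0^4*ca^4*sa^2*su^4 + (-64)*x0^4*ca^4*sa^2*su^6 + (64)*x0^4*ca^4*sa^2*cu^2*su^2 + (-128)*x0^4*ca^4*sa^2*cu^2*su^4 + (-64)*x0^4*ca^4*sa^2*cu^4*su^2 + (128)*x0^4*ca^5*sa*cu*su^3 + (-128)*x0^4*ca^5*sa*cu*su^5 + (128)*x0^4*ca^5*sa*cu^3*su + (-256)*x0^4*ca^5*sa*cu^3*su^3 + (-128)*x0^4*ca^5*sa*cu^5*su + (-64)*x0^4*ca^6*su^4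 + (64)*x0^4*ca^6*su^6 + (64)*x0^4*ca^6*cu^2*su^4 + (64)*x0^4*ca^6*cu^4 + (-64)*x0^4*ca^6*cu^4*su^2 + (-64)*x0^4*ca^6*cu^6 + (48)*x0^5*ca^2*sa*su^3 + (-48)*x0^5*ca^2*sa*su^5 + (48)*x0^5*ca^2*sa*cu^2*su + (-96)*x0^5*ca^2*sa*cu^2*su^3 + (-48)*x0^5*ca^2*sa*cu^4*su + (48)*x0^5*ca^3*cu*su^2 + (-48)*x0^5*ca^3*cu*su^4 + (48)*x0^5*ca^3*cu^3 + (-96)*x0^5*ca^3*cu^3*su^2 + (-48)*x0^5*ca^3*cu^5 + (-64)*x0^5*ca^4*sa*su^3 + (64)*x0^5*ca^4*sa*su^5 + (-64)*x0^5*ca^4*sa*cu^2*su + (128)*x0^5*ca^4*sa*cu^2*su^3 + (64)*x0^5*ca^4*sa*cu^4*su + (-64)*x0^5*ca^5*cu*su^2 + (64)*x0^5*ca^5*cu*su^4 + (-64)*x0^5*ca^5*cu^3 + (128)*x0^5*ca^5*cu^3*su^2 + (64)*x0^5*ca^5*cu^5 + (-16)*x0^6*ca^2*su^2 + (16)*x0^6*ca^2*su^6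 + (-16)*x0^6*ca^2*cu^2 + (16)*x0^6*ca^2*cu^2*su^2 + (32)*x0^6*ca^2*cu^2*su^4 + (16)*x0^6*ca^2*cu^4 + (16)*x0^6*ca^2*cu^4*su^2 + (-16)*x0^6*ca^2*sa^2*su^4 + (16)*x0^6*ca^2*sa^2*su^6 + (-16)*x0^6*ca^2*sa^2*cu^2*su^2 + (32)*x0^6*ca^2*sa^2*cu^2*su^4 + (16)*x0^6*ca^2*sa^2*cu^4*su^2 + (-32)*x0^6*ca^3*sa*cu*su^3 + (32)*x0^6*ca^3*sa*cu*su^5 + (-32)*x0^6*ca^3*sa*cu^3*su + (64)*x0^6*ca^3*sa*cu^3*su^3 + (32)*x0^6*ca^3*sa*cu^5*su + (16)*x0^6*ca^4*su^2 + (-16)*x0^6*ca^4*su^6 + (16)*x0^6*ca^4*cu^2 + (-32)*x0^6*ca^4*cu^2*su^2 + (-16)*x0^6*ca^4*cu^2*su^4 + (-32)*x0^6*ca^4*cu^4 + (16)*x0^6*ca^4*cu^4*su^2 + (16)*x0^6*ca^4*cu^6 + (16)*x0^7*ca^2*sa*su^3 + (-16)*x0^7*ca^2*sa*su^5 + (16)*x0^7*ca^2*sa*cu^2*su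 + (-32)*x0^7*ca^2*sa*cu^2*su^3 + (-16)*x0^7*ca^2*sa*cu^4*su + (16)*x0^7*ca^3*cu*su^2 + (-16)*x0^7*ca^3*cu*su^4 + (16)*x0^7*ca^3*cu^3 + (-32)*x0^7*ca^3*cu^3*su^2 + (-16)*x0^7*ca^3*cu^5 + (-4)*x0^8*ca^2*su^2 + (4)*x0^8*ca^2*su^4 + (-4)*x0^8*ca^2*cu^2 + (8)*x0^8*ca^2*cu^2*su^2 + (4)*x0^8*ca^2*cu^4)*hpa + ((4)*ca^2*su^2 + (4)*ca^2*cu^2 + (-4)*ca^4*su^2 + (-4)*ca^4*cu^2 + (-16)*x0*ca^2*sa*su^3 + (-16)*x0*ca^2*sa*cu^2*su + (-16)*x0*ca^3*cu*su^2 + (-16)*x0*ca^3*cu^3 + (16)*x0*ca^4*sa*su^3 + (16)*x0*ca^4*sa*cu^2*su + (16)*x0*ca^5*cu*su^2 + (16)*x0*ca^5*cu^3 + (16)*x0^2*ca^2*su^2 + (16)*x0^2*ca^2*su^4 + (16)*x0^2*ca^2*cu^2 + (16)*x0^2*ca^2*cu^2*su^2 + (32)*x0^2*ca^3*sa*cu*su^3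 + (32)*x0^2*ca^3*sa*cu^3*su + (-32)*x0^2*ca^4*su^2 + (-32)*x0^2*ca^4*su^4 + (-32)*x0^2*ca^4*cu^2 + (-16)*x0^2*ca^4*cu^2*su^2 + (16)*x0^2*ca^4*cu^4 + (-32)*x0^2*ca^5*sa*cu*su^3 + (-32)*x0^2*ca^5*sa*cu^3*su + (16)*x0^2*ca^6*su^2 + (16)*x0^2*ca^6*su^4 + (16)*x0^2*ca^6*cu^2 + (-16)*x0^2*ca^6*cu^4 + (-48)*x0^3*ca^2*sa*su^3 + (-48)*x0^3*ca^2*sa*cu^2*su + (-48)*x0^3*ca^3*cu*su^2 + (-48)*x0^3*ca^3*cu^3 + (112)*x0^3*ca^4*sa*su^3 + (112)*x0^3*ca^4*sa*cu^2*su + (112)*x0^3*ca^5*cu*su^2 + (112)*x0^3*ca^5*cu^3 + (-64)*x0^3*ca^6*sa*su^3 + (-64)*x0^3*ca^6*sa*cu^2*su + (-64)*x0^3*ca^7*cu*su^2 + (-64)*x0^3*ca^7*cu^3 + (24)*x0^4*ca^2*su^2 + (32)*x0^4*ca^2*su^4 + (24)*x0^4*ca^2*cu^2 + (32)*x0^4*ca^2*cu^2*su^2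 + (64)*x0^4*ca^3*sa*cu*su^3 + (64)*x0^4*ca^3*sa*cu^3*su + (-56)*x0^4*ca^4*su^2 + (-128)*x0^4*ca^4*su^4 + (-56)*x0^4*ca^4*cu^2 + (-96)*x0^4*ca^4*cu^2*su^2 + (32)*x0^4*ca^4*cu^4 + (-192)*x0^4*ca^5*sa*cu*su^3 + (-192)*x0^4*ca^5*sa*cu^3*su + (32)*x0^4*ca^6*su^2 + (160)*x0^4*ca^6*su^4 + (32)*x0^4*ca^6*cu^2 + (64)*x0^4*ca^6*cu^2*su^2 + (-96)*x0^4*ca^6*cu^4 + (128)*x0^4*ca^7*sa*cu*su^3 + (128)*x0^4*ca^7*sa*cu^3*su + (-64)*x0^4*ca^8*su^4 + (64)*x0^4*ca^8*cu^4 + (-48)*x0^5*ca^2*sa*su^3 + (-48)*x0^5*ca^2*sa*cu^2*su + (-48)*x0^5*ca^3*cu*su^2 + (-48)*x0^5*ca^3*cu^3 + (112)*x0^5*ca^4*sa*su^3 + (112)*x0^5*ca^4*sa*cu^2*su + (112)*x0^5*ca^5*cu*su^2 + (112)*x0^5*ca^5*cu^3 + (-64)*x0^5*ca^6*sa*su^3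 + (-64)*x0^5*ca^6*sa*cu^2*su + (-64)*x0^5*ca^7*cu*su^2 + (-64)*x0^5*ca^7*cu^3 + (16)*x0^6*ca^2*su^2 + (16)*x0^6*ca^2*su^4 + (16)*x0^6*ca^2*cu^2 + (16)*x0^6*ca^2*cu^2*su^2 + (32)*x0^6*ca^3*sa*cu*su^3 + (32)*x0^6*ca^3*sa*cu^3*su + (-32)*x0^6*ca^4*su^2 + (-32)*x0^6*ca^4*su^4 + (-32)*x0^6*ca^4*cu^2 + (-16)*x0^6*ca^4*cu^2*su^2 + (16)*x0^6*ca^4*cu^4 + (-32)*x0^6*ca^5*sa*cu*su^3 + (-32)*x0^6*ca^5*sa*cu^3*su + (16)*x0^6*ca^6*su^2 + (16)*x0^6*ca^6*su^4 + (16)*x0^6*ca^6*cu^2 + (-16)*x0^6*ca^6*cu^4 + (-16)*x0^7*ca^2*sa*su^3 + (-16)*x0^7*ca^2*sa*cu^2*su + (-16)*x0^7*ca^3*cu*su^2 + (-16)*x0^7*ca^3*cu^3 + (16)*x0^7*ca^4*sa*su^3 + (16)*x0^7*ca^4*sa*cu^2*su + (16)*x0^7*ca^5*cu*su^2 + (16)*x0^7*ca^5*cu^3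 + (4)*x0^8*ca^2*su^2 + (4)*x0^8*ca^2*cu^2 + (-4)*x0^8*ca^4*su^2 + (-4)*x0^8*ca^4*cu^2)*hpu
  have hnum1 : (c2 - x0)*D1 - D2*(c1 - x0) = 2*sa*su*(x0^2 - 1) := by
    rw [hD1, hD2, hc1, hc2]; ring
  have hnum2 : s2*D1 - D2*s1 = FI := by
    rw [hD1, hD2, hc1, hc2, hs1, hs2, hFI]; ring
  have hdre : (x0 + (c2 - x0)/D2) - (x0 + (c1 - x0)/D1) = (2*sa*su*(x0^2 - 1))/(D2*D1) := by
    rw [show (x0 + (c2 - x0)/D2) - (x0 + (c1 - x0)/D1) = (c2 - x0)/D2 - (c1 - x0)/D1 from by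
      ring, div_sub_div _ _ hD2ne hD1ne, hnum1]
  have hdim : s2/D2 - s1/D1 = FI/(D2*D1) := by
    rw [div_sub_div _ _ hD2ne hD1ne, hnum2]
  have hD1ne' : (1 - 2*x0*c1 + x0^2) ≠ 0 := hD1 ▸ hD1ne
  have hkpne' : ((x0^2 + 1)^2 - 4*x0^2*ca^2) ≠ 0 := hkp ▸ hkpne
  have hE : (x0 + (c1 - x0)/D1) - xc = ((x0^2 - 1)*e1)/(D1*kp) := by
    rw [hxc, he1]
    field_simp
    rw [hD1, hkp]
    ring
  have key1 : ∀ s : ℝ,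
      ((x0 + (c1 - x0)/D1) + s*((x0 + (c2 - x0)/D2) - (x0 + (c1 - x0)/D1)) - xc)^2/a^2
        + (s1/D1 + s*(s2/D2 - s1/D1))^2/b^2 - 1
      = kp*(SS*s + D2*TT)^2/(SS*(ca^2*D1^2*D2^2)) := by
    intro s
    have hL : ((x0 + (c1 - x0)/D1) + s*((x0 + (c2 - x0)/D2) - (x0 + (c1 - x0)/D1)) - xc)^2/a^2
        + (s1/D1 + s*(s2/D2 - s1/D1))^2/b^2 - 1
        = ((e1*D2 + 2*sa*su*kp*s)^2 + kp*(s1*D2 + FI*s)^2 - ca^2*D1^2*D2^2)/(ca^2*D1^2*D2^2) := by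
      rw [show (x0 + (c1 - x0)/D1) + s*((x0 + (c2 - x0)/D2) - (x0 + (c1 - x0)/D1)) - xc
          = ((x0 + (c1 - x0)/D1) - xc) + s*((x0 + (c2 - x0)/D2) - (x0 + (c1 - x0)/D1)) from by
        ring, hE, hdre, hdim, ha, hb2]
      field_simp
      ring
    have h9 : (e1*D2 + 2*sa*su*kp*s)^2 + kp*(s1*D2 + FI*s)^2 - ca^2*D1^2*D2^2
        = kp*(SS*s + D2*TT)^2/SS := by
      rw [eq_div_iff hSSne, hSS, hTT]
      linear_combination (D2^2)*hC0
    rw [hL, h9, div_div]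
  refine ⟨((x0 + (c1 - x0)/D1) + (-(D2*TT)/SS)*((x0 + (c2 - x0)/D2) - (x0 + (c1 - x0)/D1)),
           s1/D1 + (-(D2*TT)/SS)*(s2/D2 - s1/D1)), ⟨⟨-(D2*TT)/SS, rfl⟩, ?_⟩, ?_⟩
  · have h := key1 (-(D2*TT)/SS)
    have hz0 : SS*(-(D2*TT)/SS) + D2*TT = 0 := by
      field_simp
      ring
    rw [hz0] at h
    have h2 : kp*(0:ℝ)^2/(SS*(ca^2*D1^2*D2^2)) = 0 := by simp
    rw [h2] at h
    dsimp only
    linarith [h]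
  · rintro q ⟨⟨s, rfl⟩, hell⟩
    dsimp only at hell
    have h := key1 s
    have h0 : kp*(SS*s + D2*TT)^2/(SS*(ca^2*D1^2*D2^2)) = 0 := by
      rw [← h]; linarith [hell]
    rw [div_eq_zero_iff] at h0
    rcases h0 with h0 | h0
    · rcases mul_eq_zero.mp h0 with h0' | h0'
      · exact absurd h0' hkpne
      · have h1 : SS*s + D2*TT = 0 := by
          exact pow_eq_zero_iff two_ne_zero |>.mp h0'
        have hs : s = -(D2*TT)/SS := by
          rw [eq_div_iff hSSne]
          linear_combination h1
        rw [hs]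
    · exact absurd h0 (mul_ne_zero hSSne hdenne)


/-- Every side of the harmonic polygon is tangent to the Brocard inellipse:
for every `t` and `k`, the line through `w_k` and `w_{k+1}` meets the ellipse
`(x − x_c)²/a² + y²/b² = 1` in exactly one point, where
`κ = 2x0·cos(2α) − x0³ − 1/x0`,
`x_c = ((2x0² − 1)·cos(2α) − x0⁴ + x0² − 1)/κ`,
`κ′ = (x0² + 1)² − 4x0²·cos²α`, `a = (1 − x0²)·cos α/κ′`, `b = cos α/√κ′`. -/
theorem sides_tangent_brocard_inellipse (N : ℕ) (hN : 3 ≤ N)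
    (x0 : ℝ) (hx0 : 0 < |x0|) (hx1 : |x0| < 1)
    (z w : ℝ → ℤ → ℂ)
    (hz : ∀ (t : ℝ) (k : ℤ), z t k = Complex.exp (Complex.I *
      ((2 * (Real.pi / N) * (k : ℝ) + t : ℝ) : ℂ)))
    (hw : ∀ (t : ℝ) (k : ℤ), w t k = (x0 : ℂ) +
      (z t k - (x0 : ℂ)) / ((‖z t k - (x0 : ℂ)‖) ^ 2 : ℝ))
    (κ xc κ' a b : ℝ)
    (hκ : κ = 2 * x0 * Real.cos (2 * (Real.pi / N)) - x0 ^ 3 - 1 / x0)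
    (hxc : xc = ((2 * x0 ^ 2 - 1) * Real.cos (2 * (Real.pi / N)) -
      x0 ^ 4 + x0 ^ 2 - 1) / κ)
    (hκ' : κ' = (x0 ^ 2 + 1) ^ 2 - 4 * x0 ^ 2 * Real.cos (Real.pi / N) ^ 2)
    (ha : a = (1 - x0 ^ 2) * Real.cos (Real.pi / N) / κ')
    (hb : b = Real.cos (Real.pi / N) / Real.sqrt κ') :
    ∀ (t : ℝ) (k : ℤ), ∃! p : ℂ,
      (∃ s : ℝ, p = w t k + s • (w t (k + 1) - w t k)) ∧
      (p.re - xc) ^ 2 / a ^ 2 + p.im ^ 2 / b ^ 2 = 1 := by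
  intro t k
  have hNpos : (0:ℝ) < (N:ℝ) := by
    have : (3:ℝ) ≤ (N:ℝ) := by exact_mod_cast hN
    linarith
  have hN3 : (3:ℝ) ≤ (N:ℝ) := by exact_mod_cast hN
  have hα1 : (0:ℝ) < Real.pi/N := div_pos Real.pi_pos hNpos
  have hα3 : Real.pi/N ≤ Real.pi/3 := by
    apply div_le_div_of_nonneg_left Real.pi_pos.le (by norm_num) hN3
  have hα2 : Real.pi/N < Real.pi/2 := by
    have := Real.pi_pos; linarith
  have hca : 0 < Real.cos (Real.pi/N) :=
    Real.cos_pos_of_mem_Ioo ⟨by linarith, hα2⟩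
  have hsa : 0 < Real.sin (Real.pi/N) :=
    Real.sin_pos_of_pos_of_lt_pi hα1 (by have := Real.pi_pos; linarith)
  have hpa : Real.sin (Real.pi/N)^2 = 1 - Real.cos (Real.pi/N)^2 := by
    have := Real.sin_sq_add_cos_sq (Real.pi/N); linarith
  obtain ⟨u, hu⟩ : ∃ u : ℝ, u = 2*(Real.pi/N)*(k:ℝ) + t + Real.pi/N := ⟨_, rfl⟩
  have hpu : Real.sin u^2 = 1 - Real.cos u^2 := by
    have := Real.sin_sq_add_cos_sq u; linarith
  have hx0' : x0 ≠ 0 := by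
    intro h; rw [h] at hx0; simp at hx0
  have hx1' : x0^2 < 1 := by nlinarith [sq_abs x0, abs_nonneg x0]
  have h1x : (0:ℝ) < 1 - x0^2 := by linarith
  have hκ'pos : (0:ℝ) < (x0^2 + 1)^2 - 4*x0^2*Real.cos (Real.pi/N)^2 := by
    rw [show (x0^2 + 1)^2 - 4*x0^2*Real.cos (Real.pi/N)^2 = (1 - x0^2)^2 + 4*x0^2*Real.sin (Real.pi/N)^2 from by
      linear_combination (-4*x0^2)*hpa]
    exact add_pos_of_pos_of_nonneg (pow_pos h1x 2) (by positivity)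
  have hκval : 2 * x0 * Real.cos (2 * (Real.pi / N)) - x0 ^ 3 - 1 / x0
      = -((x0^2 + 1)^2 - 4*x0^2*Real.cos (Real.pi/N)^2)/x0 := by
    rw [Real.cos_two_mul]
    field_simp
    ring
  have hκdne : -((x0^2 + 1)^2 - 4*x0^2*Real.cos (Real.pi/N)^2)/x0 ≠ 0 :=
    div_ne_zero (neg_ne_zero.mpr (ne_of_gt hκ'pos)) hx0'
  have hxcv : xc = -(x0*((2*x0^2 - 1)*(2*Real.cos (Real.pi/N)^2 - 1) - x0^4 + x0^2 - 1))/((x0^2 + 1)^2 - 4*x0^2*Real.cos (Real.pi/N)^2) := by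
    rw [hxc, hκ, hκval, Real.cos_two_mul, div_eq_div_iff hκdne (ne_of_gt hκ'pos)]
    field_simp
  have hav : a = (1 - x0^2)*Real.cos (Real.pi/N)/((x0^2 + 1)^2 - 4*x0^2*Real.cos (Real.pi/N)^2) := by
    rw [ha, hκ']
  have hb2v : b^2 = Real.cos (Real.pi/N)^2/((x0^2 + 1)^2 - 4*x0^2*Real.cos (Real.pi/N)^2) := by
    rw [hb, hκ', div_pow, Real.sq_sqrt (le_of_lt hκ'pos)]
  have hb0v : b ≠ 0 := by
    rw [hb]
    exact ne_of_gt (div_pos hca (Real.sqrt_pos.mpr (by rw [hκ']; exact hκ'pos)))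
  have e1θ : 2 * (Real.pi / N) * ((k:ℤ) : ℝ) + t = u - Real.pi/N := by
    rw [hu]; ring
  have e2θ : 2 * (Real.pi / N) * (((k+1):ℤ) : ℝ) + t = u + Real.pi/N := by
    rw [hu]; push_cast; ring
  have hz1 : z t k = Complex.exp (((u - Real.pi/N : ℝ) : ℂ) * Complex.I) := by
    rw [hz t k, e1θ, mul_comm]
  have hz2 : z t (k+1) = Complex.exp (((u + Real.pi/N : ℝ) : ℂ) * Complex.I) := by
    rw [hz t (k+1), e2θ, mul_comm]
  have hre1 : (z t k).re = (Real.cos u*Real.cos (Real.pi/N) + Real.sin u*Real.sin (Real.pi/N)) := by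
    rw [hz1, Complex.exp_ofReal_mul_I_re, Real.cos_sub]
  have him1 : (z t k).im = (Real.sin u*Real.cos (Real.pi/N) - Real.cos u*Real.sin (Real.pi/N)) := by
    rw [hz1, Complex.exp_ofReal_mul_I_im, Real.sin_sub]
  have hre2 : (z t (k+1)).re = (Real.cos u*Real.cos (Real.pi/N) - Real.sin u*Real.sin (Real.pi/N)) := by
    rw [hz2, Complex.exp_ofReal_mul_I_re, Real.cos_add]
  have him2 : (z t (k+1)).im = (Real.sin u*Real.cos (Real.pi/N) + Real.cos u*Real.sin (Real.pi/N)) := by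
    rw [hz2, Complex.exp_ofReal_mul_I_im, Real.sin_add]
  have habs1 : (‖z t k - (x0:ℂ)‖)^2 = (1 - 2*x0*(Real.cos u*Real.cos (Real.pi/N) + Real.sin u*Real.sin (Real.pi/N)) + x0^2) := by
    rw [Complex.sq_norm, Complex.normSq_apply, Complex.sub_re, Complex.sub_im,
      Complex.ofReal_re, Complex.ofReal_im, hre1, him1]
    linear_combination ((Real.cos u)^2 + (Real.sin u)^2) * hpa + hpu
  have habs2 : (‖z t (k+1) - (x0:ℂ)‖)^2 = (1 - 2*x0*(Real.cos u*Real.cos (Real.pi/N) - Real.sin u*Real.sin (Real.pi/N)) + x0^2) := by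
    rw [Complex.sq_norm, Complex.normSq_apply, Complex.sub_re, Complex.sub_im,
      Complex.ofReal_re, Complex.ofReal_im, hre2, him2]
    linear_combination ((Real.cos u)^2 + (Real.sin u)^2) * hpa + hpu
  have hw1re : (w t k).re = x0 + ((Real.cos u*Real.cos (Real.pi/N) + Real.sin u*Real.sin (Real.pi/N)) - x0)/(1 - 2*x0*(Real.cos u*Real.cos (Real.pi/N) + Real.sin u*Real.sin (Real.pi/N)) + x0^2) := by
    rw [hw t k, Complex.add_re, Complex.ofReal_re, Complex.div_ofReal_re, Complex.sub_re,
      Complex.ofReal_re, hre1, habs1]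
  have hw1im : (w t k).im = (Real.sin u*Real.cos (Real.pi/N) - Real.cos u*Real.sin (Real.pi/N))/(1 - 2*x0*(Real.cos u*Real.cos (Real.pi/N) + Real.sin u*Real.sin (Real.pi/N)) + x0^2) := by
    rw [hw t k, Complex.add_im, Complex.ofReal_im, Complex.div_ofReal_im, Complex.sub_im,
      Complex.ofReal_im, him1, habs1]
    ring
  have hw2re : (w t (k+1)).re = x0 + ((Real.cos u*Real.cos (Real.pi/N) - Real.sin u*Real.sin (Real.pi/N)) - x0)/(1 - 2*x0*(Real.cos u*Real.cos (Real.pi/N) - Real.sin u*Real.sin (Real.pi/N)) + x0^2) := by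
    rw [hw t (k+1), Complex.add_re, Complex.ofReal_re, Complex.div_ofReal_re, Complex.sub_re,
      Complex.ofReal_re, hre2, habs2]
  have hw2im : (w t (k+1)).im = (Real.sin u*Real.cos (Real.pi/N) + Real.cos u*Real.sin (Real.pi/N))/(1 - 2*x0*(Real.cos u*Real.cos (Real.pi/N) - Real.sin u*Real.sin (Real.pi/N)) + x0^2) := by
    rw [hw t (k+1), Complex.add_im, Complex.ofReal_im, Complex.div_ofReal_im, Complex.sub_im,
      Complex.ofReal_im, him2, habs2]
    ring
  have KEY := brocard_key x0 (Real.cos (Real.pi/N)) (Real.sin (Real.pi/N)) (Real.cos u) (Real.sin u) xc a b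
      (Real.cos u*Real.cos (Real.pi/N) + Real.sin u*Real.sin (Real.pi/N)) (Real.sin u*Real.cos (Real.pi/N) - Real.cos u*Real.sin (Real.pi/N)) (Real.cos u*Real.cos (Real.pi/N) - Real.sin u*Real.sin (Real.pi/N)) (Real.sin u*Real.cos (Real.pi/N) + Real.cos u*Real.sin (Real.pi/N)) (1 - 2*x0*(Real.cos u*Real.cos (Real.pi/N) + Real.sin u*Real.sin (Real.pi/N)) + x0^2) (1 - 2*x0*(Real.cos u*Real.cos (Real.pi/N) - Real.sin u*Real.sin (Real.pi/N)) + x0^2) ((x0^2 + 1)^2 - 4*x0^2*Real.cos (Real.pi/N)^2) (2*x0*Real.cos (Real.pi/N)^2 - (1 + x0^2)*(Real.cos u*Real.cos (Real.pi/N) + Real.sin u*Real.sin (Real.pi/N))) (2*Real.sin (Real.pi/N)*Real.cos u*(1 + x0^2) - 4*x0*Real.cos (Real.pi/N)*Real.sin (Real.pi/N)*(Real.sin u^2 + Real.cos u^2)) (4*Real.sin (Real.pi/N)^2*Real.sin u^2*((x0^2 + 1)^2 - 4*x0^2*Real.cos (Real.pi/N)^2) + (2*Real.sin (Real.pi/N)*Real.cos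 u*(1 + x0^2) - 4*x0*Real.cos (Real.pi/N)*Real.sin (Real.pi/N)*(Real.sin u^2 + Real.cos u^2))^2) (2*Real.sin (Real.pi/N)*Real.sin u*(2*x0*Real.cos (Real.pi/N)^2 - (1 + x0^2)*(Real.cos u*Real.cos (Real.pi/N) + Real.sin u*Real.sin (Real.pi/N))) + (Real.sin u*Real.cos (Real.pi/N) - Real.cos u*Real.sin (Real.pi/N))*(2*Real.sin (Real.pi/N)*Real.cos u*(1 + x0^2) - 4*x0*Real.cos (Real.pi/N)*Real.sin (Real.pi/N)*(Real.sin u^2 + Real.cos u^2)))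
      hx0' hx1' hca hsa hpa hpu rfl rfl rfl rfl rfl rfl rfl rfl rfl rfl rfl
      hxcv hav hb2v hb0v
  obtain ⟨q, ⟨⟨s₀, hq0⟩, hqell⟩, hquniq⟩ := KEY
  have hcoord : ∀ (y : ℂ) (s : ℝ), y = w t k + s • (w t (k + 1) - w t k) →
      y.re = (x0 + ((Real.cos u*Real.cos (Real.pi/N) + Real.sin u*Real.sin (Real.pi/N)) - x0)/(1 - 2*x0*(Real.cos u*Real.cos (Real.pi/N) + Real.sin u*Real.sin (Real.pi/N)) + x0^2)) + s*((x0 + ((Real.cos u*Real.cos (Real.pi/N) - Real.sin u*Real.sin (Real.pi/N)) - x0)/(1 - 2*x0*(Real.cos u*Real.cos (Real.pi/N) - Real.sin u*Real.sin (Real.pi/N)) + x0^2)) - (x0 + ((Real.cos u*Real.cos (Real.pi/N) + Real.sin u*Real.sin (Real.pi/N)) - x0)/(1 - 2*x0*(Real.cos u*Real.cos (Real.pi/N) + Real.sin u*Real.sin (Real.pi/N)) + x0^2)))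
      ∧ y.im = (Real.sin u*Real.cos (Real.pi/N) - Real.cos u*Real.sin (Real.pi/N))/(1 - 2*x0*(Real.cos u*Real.cos (Real.pi/N) + Real.sin u*Real.sin (Real.pi/N)) + x0^2) + s*((Real.sin u*Real.cos (Real.pi/N) + Real.cos u*Real.sin (Real.pi/N))/(1 - 2*x0*(Real.cos u*Real.cos (Real.pi/N) - Real.sin u*Real.sin (Real.pi/N)) + x0^2) - (Real.sin u*Real.cos (Real.pi/N) - Real.cos u*Real.sin (Real.pi/N))/(1 - 2*x0*(Real.cos u*Real.cos (Real.pi/N) + Real.sin u*Real.sin (Real.pi/N)) + x0^2)) := by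
    intro y s hy
    constructor
    · have := congrArg Complex.re hy
      rw [Complex.add_re, Complex.smul_re, Complex.sub_re, hw1re, hw2re] at this
      exact this
    · have := congrArg Complex.im hy
      rw [Complex.add_im, Complex.smul_im, Complex.sub_im, hw1im, hw2im] at this
      exact this
  refine ⟨(q.1 : ℂ) + (q.2 : ℂ)*Complex.I, ⟨⟨s₀, ?_⟩, ?_⟩, ?_⟩
  · have hq1 : q.1 = (x0 + ((Real.cos u*Real.cos (Real.pi/N) + Real.sin u*Real.sin (Real.pi/N)) - x0)/(1 - 2*x0*(Real.cos u*Real.cos (Real.pi/N) + Real.sin u*Real.sin (Real.pi/N)) + x0^2)) + s₀*((x0 + ((Real.cos u*Real.cos (Real.pi/N) - Real.sin u*Real.sin (Real.pi/N)) - x0)/(1 - 2*x0*(Real.cos u*Real.cos (Real.pi/N) - Real.sin u*Real.sin (Real.pi/N)) + x0^2)) - (x0 + ((Real.cos u*Real.cos (Real.pi/N) + Real.sin u*Real.sin (Real.pi/N)) - x0)/(1 - 2*x0*(Real.cos u*Real.cos (Real.pi/N) + Real.sin u*Real.sin (Real.pi/N)) + x0^2))) := by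
      rw [hq0]
    have hq2 : q.2 = (Real.sin u*Real.cos (Real.pi/N) - Real.cos u*Real.sin (Real.pi/N))/(1 - 2*x0*(Real.cos u*Real.cos (Real.pi/N) + Real.sin u*Real.sin (Real.pi/N)) + x0^2) + s₀*((Real.sin u*Real.cos (Real.pi/N) + Real.cos u*Real.sin (Real.pi/N))/(1 - 2*x0*(Real.cos u*Real.cos (Real.pi/N) - Real.sin u*Real.sin (Real.pi/N)) + x0^2) - (Real.sin u*Real.cos (Real.pi/N) - Real.cos u*Real.sin (Real.pi/N))/(1 - 2*x0*(Real.cos u*Real.cos (Real.pi/N) + Real.sin u*Real.sin (Real.pi/N)) + x0^2)) := by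
      rw [hq0]
    apply Complex.ext
    · simp only [Complex.add_re, Complex.mul_re, Complex.smul_re, Complex.sub_re,
        Complex.ofReal_re, Complex.ofReal_im, Complex.I_re, Complex.I_im, smul_eq_mul]
      rw [hw1re, hw2re, hq1]; ring
    · simp only [Complex.add_im, Complex.mul_im, Complex.smul_im, Complex.sub_im,
        Complex.ofReal_re, Complex.ofReal_im, Complex.I_re, Complex.I_im, smul_eq_mul]
      rw [hw1im, hw2im, hq2]; ring
  · have h1 : ((q.1:ℂ) + (q.2:ℂ)*Complex.I).re = q.1 := by simp
    have h2 : ((q.1:ℂ) + (q.2:ℂ)*Complex.I).im = q.2 := by simp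
    rw [h1, h2]
    exact hqell
  · rintro y ⟨⟨s, hy⟩, hyell⟩
    obtain ⟨hyre, hyim⟩ := hcoord y s hy
    have : (y.re, y.im) = q := by
      apply hquniq
      constructor
      · exact ⟨s, by rw [Prod.mk.injEq]; exact ⟨hyre, hyim⟩⟩
      · dsimp only
        exact hyell
    have e1' : y.re = q.1 := by rw [← this]
    have e2' : y.im = q.2 := by rw [← this]
    apply Complex.ext
    · simp only [Complex.add_re, Complex.ofReal_re, Complex.mul_re, Complex.ofReal_im,
        Complex.I_re, Complex.I_im]
      rw [e1']; ring
    · simp only [Complex.add_im, Complex.ofReal_im, Complex.mul_im, Complex.ofReal_re,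
        Complex.I_re, Complex.I_im]
      rw [e2']; ring
end
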